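/- Let P : C̃ → C together with ramification numbers e be a d-fold ramified covering of small categories, let n ≥ 1, let f ∈ N_n(C) be a chain which is not a constant identity chain, and let 0 ≤ i ≤ n be such that the i-th face ∂_i f ∈ N_{n−1}(C) is also not a constant identity chain. Then the face operator ∂_i restricts to a bijection from the set of preimages of f in N_n(C̃) under P onto the set of preimages of ∂_i f in N_{n−1}(C̃) under P. -/

import Mathlib

open CategoryTheory

universe u

/-- The set of morphisms of `C` with target `x`, encoded as a sigma type. -/
abbrev Tgt (C : Type u) [SmallCategory C] (x : C) : Type u := Σ a : C, a ⟶ x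

/-- The set of morphisms of `C` with source `x`, encoded as a sigma type. -/
abbrev Src (C : Type u) [SmallCategory C] (x : C) : Type u := Σ b : C, x ⟶ b

/-- The map `T(x̃) → T(P x̃)` induced by a functor `P`. -/
def tgtMap {D C : Type u} [SmallCategory D] [SmallCategory C] (P : D ⥤ C) (x : D) :
    Tgt D x → Tgt C (P.obj x) := fun g => ⟨P.obj g.1, P.map g.2⟩

/-- The map `S(x̃) → S(P x̃)` induced by a functor `P`. -/
def srcMap {D C : Type u} [SmallCategory D] [SmallCategory C] (P : D ⥤ C) (x : D) :
    Src D x → Src C (P.obj x) := fun g => ⟨P.obj g.1, P.map g.2⟩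

/-- `P : D ⥤ C` together with ramification numbers `e` is a ramified covering:
`C` is connected, `e x ≥ 1` for all `x`, `P : T(x̃) → T(P x̃)` is bijective,
every morphism of `S̄(P x̃)` has exactly `e x̃` preimages in `S̄(x̃)`, and
`e x̃ = 1` whenever `S̄(P x̃)` is empty. -/
structure IsRamifiedCovering {D C : Type u} [SmallCategory D] [SmallCategory C]
    (P : D ⥤ C) (e : D → ℕ) : Prop where
  nonempty : Nonempty C
  zigzag : ∀ x y : C, Zigzag x y
  one_le : ∀ x : D, 1 ≤ e x
  tgt_bij : ∀ x : D, Function.Bijective (tgtMap P x)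
  src_count : ∀ (x : D) (g : Src C (P.obj x)), g ≠ ⟨P.obj x, 𝟙 (P.obj x)⟩ →
    Nat.card {h : Src D x // h ≠ ⟨x, 𝟙 x⟩ ∧ srcMap P x h = g} = e x
  ram_one : ∀ x : D, (∀ g : Src C (P.obj x), g = ⟨P.obj x, 𝟙 (P.obj x)⟩) → e x = 1


/-- `P` is a `d`-fold ramified covering: for every object `x` of `C`, the multiset
`R(x)` of objects over `x`, each counted with multiplicity its ramification number,
has cardinality `d`, i.e. `Σ_{P xt = x} e(xt) = d`. -/
def IsDFold {D C : Type u} [SmallCategory D] [SmallCategory C]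
    (P : D ⥤ C) (e : D → ℕ) (d : ℕ) : Prop :=
  ∀ x : C, Nat.card (Σ a : {a : D // P.obj a = x}, Fin (e a.1)) = d

/-- The `i`-th simplicial face operator `∂ᵢ : N_{n+1}(C) → N_n(C)` on the nerve of `C`. -/
def nerveFace (C : Type u) [SmallCategory C] (n : ℕ) (i : Fin (n + 2)) :
    ComposableArrows C (n + 1) → ComposableArrows C n :=
  (nerve C).map (SimplexCategory.δ i).op

section Helpers
variable {C : Type u} [SmallCategory C]
lemma tgt_eq_iff {x a b : C} (m₁ : a ⟶ x) (m₂ : b ⟶ x) :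
    (⟨a, m₁⟩ : Tgt C x) = ⟨b, m₂⟩ ↔ ∃ hab : a = b, m₁ = eqToHom hab ≫ m₂ := by
  constructor
  · intro hp
    obtain ⟨h1, h2⟩ := Sigma.mk.inj_iff.mp hp
    subst h1
    exact ⟨rfl, by simpa using eq_of_heq h2⟩
  · rintro ⟨rfl, rfl⟩
    simp
lemma src_eq_iff {x a b : C} (m₁ : x ⟶ a) (m₂ : x ⟶ b) :
    (⟨a, m₁⟩ : Src C x) = ⟨b, m₂⟩ ↔ ∃ hab : a = b, m₁ = m₂ ≫ eqToHom hab.symm := by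
  constructor
  · intro hp
    obtain ⟨h1, h2⟩ := Sigma.mk.inj_iff.mp hp
    subst h1
    exact ⟨rfl, by simpa using eq_of_heq h2⟩
  · rintro ⟨rfl, rfl⟩
    simp
lemma tgt_id_iff {x a : C} (m : a ⟶ x) :
    (⟨a, m⟩ : Tgt C x) = ⟨x, 𝟙 x⟩ ↔ ∃ hab : a = x, m = eqToHom hab := by
  rw [tgt_eq_iff]; exact exists_congr fun hab => by simp
lemma src_id_iff {x a : C} (m : x ⟶ a) :
    (⟨a, m⟩ : Src C x) = ⟨x, 𝟙 x⟩ ↔ ∃ hab : a = x, m = eqToHom hab.symm := by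
  rw [src_eq_iff]; exact exists_congr fun hab => by simp
end Helpers

lemma all_one_of_card_sigma_eq {V : Type u} {W : V → Type u} {k : ℕ} (hk : k ≠ 0)
    (hV : Nat.card V = k) (hS : Nat.card (Σ v, W v) = k)
    (hpos : ∀ v, Nat.card (W v) ≠ 0) (v₀ : V) : Nat.card (W v₀) = 1 := by
  have hVfin : Finite V := ((Nat.card_ne_zero).mp (hV ▸ hk)).2
  have hWfin : ∀ v, Finite (W v) := fun v => ((Nat.card_ne_zero).mp (hpos v)).2
  cases nonempty_fintype V
  have hWft : ∀ v, Fintype (W v) := fun v => Fintype.ofFinite _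
  classical
  have hcards : ∑ v : V, Nat.card (W v) = k := by
    rw [← hS]
    simp only [Nat.card_eq_fintype_card]
    rw [Fintype.card_sigma]
  have hcardV : ∑ _v : V, 1 = k := by
    rw [← hV]
    simp [Nat.card_eq_fintype_card]
  by_contra hne
  have hlt : ∑ _v : V, 1 < ∑ v : V, Nat.card (W v) := by
    apply Finset.sum_lt_sum
    · intro i _
      have := hpos i; omega
    · exact ⟨v₀, Finset.mem_univ _, by have := hpos v₀; omega⟩
  omega

section Covering
variable {D C : Type u} [SmallCategory D] [SmallCategory C] {P : D ⥤ C} {e : D → ℕ}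

lemma tgtMap_mk {x z : D} (m : z ⟶ x) : tgtMap P x ⟨z, m⟩ = ⟨P.obj z, P.map m⟩ := rfl
lemma srcMap_mk {x z : D} (m : x ⟶ z) : srcMap P x ⟨z, m⟩ = ⟨P.obj z, P.map m⟩ := rfl
lemma srcMap_id (x : D) : srcMap P x ⟨x, 𝟙 x⟩ = ⟨P.obj x, 𝟙 (P.obj x)⟩ := by
  rw [srcMap_mk, P.map_id]
lemma tgtMap_id (x : D) : tgtMap P x ⟨x, 𝟙 x⟩ = ⟨P.obj x, 𝟙 (P.obj x)⟩ := by
  rw [tgtMap_mk, P.map_id]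

lemma ne_id_of_srcMap {x : D} {s : Src D x} {g : Src C (P.obj x)}
    (hs : srcMap P x s = g) (hg : g ≠ ⟨P.obj x, 𝟙 (P.obj x)⟩) : s ≠ ⟨x, 𝟙 x⟩ := by
  rintro rfl
  exact hg (by rw [← hs, srcMap_id])

/-- The set of non-identity lifts of `g` with source `t`, as a type. -/
def LiftSet (P : D ⥤ C) (t : D) (g : Src C (P.obj t)) : Type u :=
  {s : Src D t // s ≠ ⟨t, 𝟙 t⟩ ∧ srcMap P t s = g}

lemma card_liftSet (h : IsRamifiedCovering P e) (t : D) (g : Src C (P.obj t))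
    (hg : g ≠ ⟨P.obj t, 𝟙 (P.obj t)⟩) : Nat.card (LiftSet P t g) = e t :=
  h.src_count t g hg

/-- Lifts of identities are identities (Src form). -/
lemma src_lift_id (h : IsRamifiedCovering P e) {x : D} (s : Src D x)
    (hs : srcMap P x s = ⟨P.obj x, 𝟙 (P.obj x)⟩) : s = ⟨x, 𝟙 x⟩ := by
  obtain ⟨z, m⟩ := s
  rw [srcMap_mk, src_id_iff] at hs
  obtain ⟨hz, hm⟩ := hs
  have key : (⟨x, m⟩ : Tgt D z) = ⟨z, 𝟙 z⟩ := by
    apply (h.tgt_bij z).injective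
    rw [tgtMap_mk, tgtMap_id, tgt_eq_iff]
    exact ⟨hz.symm, by rw [hm]; simp⟩
  rw [tgt_id_iff] at key
  obtain ⟨hxz, hm2⟩ := key
  subst hxz
  simp only [eqToHom_refl] at hm2
  rw [hm2]

lemma lemmaL (h : IsRamifiedCovering P e) {a b c : C} (p : a ⟶ b) (q : b ⟶ c)
    (hp : (⟨a, p⟩ : Tgt C b) ≠ ⟨b, 𝟙 b⟩)
    (hq : (⟨c, q⟩ : Src C b) ≠ ⟨b, 𝟙 b⟩)
    (hpq : (⟨c, p ≫ q⟩ : Src C a) ≠ ⟨a, 𝟙 a⟩)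
    (x : D) (hx : P.obj x = b) : e x = 1 := by
  subst hx
  obtain ⟨⟨t, pt⟩, hpt⟩ := (h.tgt_bij x).surjective ⟨a, p⟩
  rw [tgtMap_mk, tgt_eq_iff] at hpt
  obtain ⟨ha, hpm⟩ := hpt
  subst ha
  simp only [eqToHom_refl, Category.id_comp] at hpm
  -- p : P.obj t ⟶ P.obj x, q : P.obj x ⟶ c, pt : t ⟶ x, P.map pt = p
  have pelt_ne : (⟨P.obj x, p⟩ : Src C (P.obj t)) ≠ ⟨P.obj t, 𝟙 (P.obj t)⟩ := by
    intro heq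
    rw [src_id_iff] at heq
    obtain ⟨hba, hpe⟩ := heq
    exact hp ((tgt_id_iff p).mpr ⟨hba.symm, hpe⟩)
  have qpelt_ne : (⟨c, p ≫ q⟩ : Src C (P.obj t)) ≠ ⟨P.obj t, 𝟙 (P.obj t)⟩ := hpq
  set V : Type u := LiftSet P t ⟨P.obj x, p⟩ with hVdef
  have hmid : ∀ v : V, P.obj v.1.1 = P.obj x := fun v => congrArg Sigma.fst v.2.2
  set W : V → Type u :=
    fun v => LiftSet P v.1.1 ⟨c, eqToHom (hmid v) ≫ q⟩ with hWdef
  set A : Type u := LiftSet P t ⟨c, p ≫ q⟩ with hAdef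
  have qelt_ne : ∀ v : V,
      (⟨c, eqToHom (hmid v) ≫ q⟩ : Src C (P.obj v.1.1)) ≠ ⟨P.obj v.1.1, 𝟙 (P.obj v.1.1)⟩ := by
    intro v heq
    rw [src_id_iff] at heq
    obtain ⟨hca, hqe⟩ := heq
    apply hq
    rw [src_id_iff]
    refine ⟨hca.trans (hmid v), ?_⟩
    have : q = eqToHom (hmid v).symm ≫ eqToHom hca.symm := by
      rw [← hqe]; simp
    rw [this]; simp
  have hcV : Nat.card V = e t := card_liftSet h t _ pelt_ne
  have hcA : Nat.card A = e t := card_liftSet h t _ qpelt_ne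
  have hcW : ∀ v : V, Nat.card (W v) = e v.1.1 := fun v => card_liftSet h v.1.1 _ (qelt_ne v)
  -- the bijection (Σ v, W v) ≃ A
  have hcompmap : ∀ vw : (Σ v : V, W v),
      srcMap P t ⟨vw.2.1.1, vw.1.1.2 ≫ vw.2.1.2⟩ = (⟨c, p ≫ q⟩ : Src C (P.obj t)) := by
    rintro ⟨⟨⟨b₁, p₁⟩, hn₁, hs₁⟩, ⟨⟨c₁, q₁⟩, hm₁, ht₁⟩⟩
    dsimp only at ht₁ ⊢
    rw [srcMap_mk, src_eq_iff] at hs₁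
    rw [srcMap_mk, src_eq_iff] at ht₁
    obtain ⟨hb₁, hp₁⟩ := hs₁
    obtain ⟨hc₁, hq₁⟩ := ht₁
    rw [srcMap_mk, src_eq_iff]
    refine ⟨hc₁, ?_⟩
    rw [P.map_comp, hp₁, hq₁]
    simp
  have hSA : Nat.card (Σ v : V, W v) = Nat.card A := by
    apply Nat.card_congr
    refine Equiv.ofBijective
      (fun vw => ⟨⟨vw.2.1.1, vw.1.1.2 ≫ vw.2.1.2⟩,
        ne_id_of_srcMap (hcompmap vw) qpelt_ne, hcompmap vw⟩) ⟨?inj, ?surj⟩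
    case inj =>
      rintro ⟨⟨⟨b₁, p₁⟩, hn₁, hs₁⟩, ⟨⟨c₁, q₁⟩, hm₁, ht₁⟩⟩
        ⟨⟨⟨b₂, p₂⟩, hn₂, hs₂⟩, ⟨⟨c₂, q₂⟩, hm₂, ht₂⟩⟩ hΦ
      dsimp only at ht₁ ht₂ hΦ
      replace hΦ : (⟨c₁, p₁ ≫ q₁⟩ : Src D t) = ⟨c₂, p₂ ≫ q₂⟩ := congrArg Subtype.val hΦ
      rw [src_eq_iff] at hΦ
      obtain ⟨hcc, hcomp⟩ := hΦ
      subst hcc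
      rw [srcMap_mk, src_eq_iff] at hs₁
      rw [srcMap_mk, src_eq_iff] at hs₂
      rw [srcMap_mk, src_eq_iff] at ht₁
      rw [srcMap_mk, src_eq_iff] at ht₂
      obtain ⟨hb₁, hp₁⟩ := hs₁
      obtain ⟨hb₂, hp₂⟩ := hs₂
      obtain ⟨hc₁, hq₁⟩ := ht₁
      obtain ⟨hc₂, hq₂⟩ := ht₂
      have hQ : (⟨b₁, q₁⟩ : Tgt D c₁) = ⟨b₂, q₂⟩ := by
        apply (h.tgt_bij c₁).injective
        rw [tgtMap_mk, tgtMap_mk, tgt_eq_iff]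
        refine ⟨hb₁.trans hb₂.symm, ?_⟩
        rw [hq₁, hq₂]
        simp
      rw [tgt_eq_iff] at hQ
      obtain ⟨hbb, hqq⟩ := hQ
      subst hbb
      simp only [eqToHom_refl, Category.id_comp] at hqq
      subst hqq
      have hP2 : (⟨t, p₁⟩ : Tgt D b₁) = ⟨t, p₂⟩ := by
        apply (h.tgt_bij b₁).injective
        rw [tgtMap_mk, tgtMap_mk, tgt_eq_iff]
        refine ⟨rfl, ?_⟩
        rw [hp₁, hp₂]
        simp
      rw [tgt_eq_iff] at hP2
      obtain ⟨hab1, hpp⟩ := hP2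
      simp only [eqToHom_refl, Category.id_comp] at hpp
      subst hpp
      rfl
    case surj =>
      rintro ⟨⟨c₃, m⟩, hne, hsm⟩
      rw [srcMap_mk, src_eq_iff] at hsm
      obtain ⟨hcc, hmm⟩ := hsm
      obtain ⟨⟨b₃, q'⟩, hq'⟩ := (h.tgt_bij c₃).surjective ⟨P.obj x, q ≫ eqToHom hcc.symm⟩
      rw [tgtMap_mk, tgt_eq_iff] at hq'
      obtain ⟨hbb, hqm⟩ := hq'
      obtain ⟨⟨a', p''⟩, hp''⟩ := (h.tgt_bij b₃).surjective ⟨P.obj t, p ≫ eqToHom hbb.symm⟩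
      rw [tgtMap_mk, tgt_eq_iff] at hp''
      obtain ⟨haa, hpm2⟩ := hp''
      have hfac : (⟨a', p'' ≫ q'⟩ : Tgt D c₃) = ⟨t, m⟩ := by
        apply (h.tgt_bij c₃).injective
        rw [tgtMap_mk, tgtMap_mk, tgt_eq_iff]
        refine ⟨haa, ?_⟩
        rw [P.map_comp, hpm2, hqm, hmm]
        simp
      rw [tgt_eq_iff] at hfac
      obtain ⟨haa2, hcomp⟩ := hfac
      set p4 : t ⟶ b₃ := eqToHom haa2.symm ≫ p'' with hp4def
      have hcomp4 : p4 ≫ q' = m := by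
        rw [hp4def, Category.assoc, hcomp]
        simp
      have hps : srcMap P t ⟨b₃, p4⟩ = (⟨P.obj x, p⟩ : Src C (P.obj t)) := by
        rw [srcMap_mk, src_eq_iff]
        refine ⟨hbb, ?_⟩
        rw [hp4def, P.map_comp, hpm2, eqToHom_map]
        simp
      have hqs : srcMap P b₃ ⟨c₃, q'⟩ = (⟨c, eqToHom hbb ≫ q⟩ : Src C (P.obj b₃)) := by
        rw [srcMap_mk, src_eq_iff]
        exact ⟨hcc, by rw [hqm]; simp⟩
      set vv : V := ⟨⟨b₃, p4⟩, ne_id_of_srcMap hps pelt_ne, hps⟩ with hvvdef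
      refine ⟨⟨vv, ⟨⟨c₃, q'⟩, ne_id_of_srcMap hqs (qelt_ne vv), hqs⟩⟩, ?_⟩
      apply Subtype.ext
      dsimp only
      rw [hcomp4]
  have hfin := all_one_of_card_sigma_eq (k := e t)
    (by have := h.one_le t; omega) hcV (hSA.trans hcA)
    (fun v => by rw [hcW v]; have := h.one_le v.1.1; omega)
    (⟨⟨x, pt⟩, ne_id_of_srcMap (by rw [srcMap_mk, hpm]) pelt_ne, by rw [srcMap_mk, hpm]⟩ : V)
  exact (hcW _).symm.trans hfin

/-- If there is a non-identity morphism into `b` and a non-identity morphism out of `b`,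
then `e x = 1` for every `x` over `b`. -/
lemma key_e_eq_one (h : IsRamifiedCovering P e) {a b c : C} (p : a ⟶ b) (q : b ⟶ c)
    (hp : (⟨a, p⟩ : Tgt C b) ≠ ⟨b, 𝟙 b⟩)
    (hq : (⟨c, q⟩ : Src C b) ≠ ⟨b, 𝟙 b⟩)
    (x : D) (hx : P.obj x = b) : e x = 1 := by
  subst hx
  by_cases hpq : (⟨c, p ≫ q⟩ : Src C a) = ⟨a, 𝟙 a⟩
  · rw [src_id_iff] at hpq
    obtain ⟨hca, hpqe⟩ := hpq
    subst hca
    -- now q : P.obj x ⟶ a with p ≫ q = eqToHom _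
    by_cases hqp : (⟨P.obj x, q ≫ p⟩ : Src C (P.obj x)) = ⟨P.obj x, 𝟙 (P.obj x)⟩
    · -- both composites are identities: the lift of q is unique
      rw [src_id_iff] at hqp
      obtain ⟨hd1, hqpe⟩ := hqp
      simp only [eqToHom_refl] at hqpe hpqe
      have hcard : Nat.card (LiftSet P x ⟨c, q⟩) = e x := card_liftSet h x _ hq
      have hne0 : Nat.card (LiftSet P x ⟨c, q⟩) ≠ 0 := by
        rw [hcard]; have := h.one_le x; omega
      obtain ⟨hnonempty, -⟩ := Nat.card_ne_zero.mp hne0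
      obtain ⟨⟨a₁, p₁⟩, hpl⟩ := (h.tgt_bij x).surjective ⟨c, p⟩
      rw [tgtMap_mk, tgt_eq_iff] at hpl
      obtain ⟨ha₁, hpm₁⟩ := hpl
      have hsub : Subsingleton (LiftSet P x ⟨c, q⟩) := by
        constructor
        rintro ⟨⟨y₁, m₁⟩, hn₁, hs₁⟩ ⟨⟨y₂, m₂⟩, hn₂, hs₂⟩
        rw [srcMap_mk, src_eq_iff] at hs₁
        rw [srcMap_mk, src_eq_iff] at hs₂
        obtain ⟨hy₁, hm₁⟩ := hs₁
        obtain ⟨hy₂, hm₂⟩ := hs₂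
        have claim1 : (⟨a₁, p₁ ≫ m₁⟩ : Tgt D y₁) = ⟨y₁, 𝟙 y₁⟩ := by
          apply (h.tgt_bij y₁).injective
          rw [tgtMap_mk, tgtMap_id, tgt_eq_iff]
          refine ⟨ha₁.trans hy₁.symm, ?_⟩
          rw [P.map_comp, hpm₁, hm₁]
          simp only [Category.assoc]
          rw [reassoc_of% hpqe]
          simp
        rw [tgt_id_iff] at claim1
        obtain ⟨hay₁, hpm1⟩ := claim1
        subst hay₁
        have claim2 : (⟨a₁, p₁ ≫ m₂⟩ : Tgt D y₂) = ⟨y₂, 𝟙 y₂⟩ := by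
          apply (h.tgt_bij y₂).injective
          rw [tgtMap_mk, tgtMap_id, tgt_eq_iff]
          refine ⟨ha₁.trans hy₂.symm, ?_⟩
          rw [P.map_comp, hpm₁, hm₂]
          simp only [Category.assoc]
          rw [reassoc_of% hpqe]
          simp
        rw [tgt_id_iff] at claim2
        obtain ⟨hay₂, hpm2⟩ := claim2
        subst hay₂
        simp only [eqToHom_refl] at hpm1 hpm2
        have claimb : (⟨x, m₁ ≫ p₁⟩ : Tgt D x) = ⟨x, 𝟙 x⟩ := by
          apply (h.tgt_bij x).injective
          rw [tgtMap_mk, tgtMap_id, tgt_eq_iff]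
          refine ⟨rfl, ?_⟩
          rw [P.map_comp, hm₁, hpm₁]
          simp only [Category.assoc, eqToHom_trans_assoc, eqToHom_refl, Category.id_comp]
          simp [hqpe]
        rw [tgt_id_iff] at claimb
        obtain ⟨hd2, hb1⟩ := claimb
        simp only [eqToHom_refl] at hb1
        have hmeq : m₁ = m₂ := by
          calc m₁ = m₁ ≫ (p₁ ≫ m₂) := by rw [hpm2]; simp
          _ = (m₁ ≫ p₁) ≫ m₂ := by simp
          _ = m₂ := by rw [hb1]; simp
        subst hmeq
        rfl
      rw [← hcard]
      exact Nat.card_unique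
    · -- q ≫ p is not an identity: use lemmaL with the pair (p, q ≫ p)
      apply lemmaL h p (q ≫ p) hp hqp ?_ x rfl
      intro hcon
      rw [src_id_iff] at hcon
      obtain ⟨hba, hcone⟩ := hcon
      apply hp
      rw [tgt_id_iff]
      refine ⟨hba.symm, ?_⟩
      have : p ≫ q ≫ p = p := by
        rw [← Category.assoc, hpqe]; simp
      rw [← this, hcone]
  · exact lemmaL h p q hp hq hpq x rfl


/-- Uniqueness of lifts of a chain with prescribed last object. -/
lemma lift_unique (h : IsRamifiedCovering P e) :
    ∀ (m : ℕ) (g₁ g₂ : ComposableArrows D m), g₁ ⋙ P = g₂ ⋙ P →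
      g₁.obj (Fin.last m) = g₂.obj (Fin.last m) → g₁ = g₂ := by
  intro m
  induction m with
  | zero =>
    intro g₁ g₂ hP hlast
    exact ComposableArrows.ext₀ hlast
  | succ m ih =>
    intro g₁ g₂ hP hlast
    have hδ : g₁.δ₀ ⋙ P = g₂.δ₀ ⋙ P := congrArg ComposableArrows.δ₀ hP
    have hδlast : g₁.δ₀.obj (Fin.last m) = g₂.δ₀.obj (Fin.last m) := by
      show g₁.obj (Fin.last m).succ = g₂.obj (Fin.last m).succ
      rw [Fin.succ_last]
      exact hlast
    have hδeq := ih g₁.δ₀ g₂.δ₀ hδ hδlast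
    have h1 : g₁.obj' 1 = g₂.obj' 1 := Functor.congr_obj hδeq ⟨0, Nat.succ_pos m⟩
    have hsig : (⟨g₁.obj' 0, g₁.map' 0 1⟩ : Tgt D (g₁.obj' 1)) =
        ⟨g₂.obj' 0, g₂.map' 0 1 ≫ eqToHom h1.symm⟩ := by
      apply (h.tgt_bij _).injective
      rw [tgtMap_mk, tgtMap_mk, tgt_eq_iff]
      refine ⟨Functor.congr_obj hP ⟨0, Nat.succ_pos (m+1)⟩, ?_⟩
      have hch := Functor.congr_hom hP (homOfLE (show (⟨0, Nat.succ_pos (m+1)⟩ : Fin (m+2)) ≤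
        ⟨1, Nat.succ_lt_succ (Nat.succ_pos m)⟩ by simp [Fin.le_def]))
      rw [P.map_comp, eqToHom_map]
      exact hch.trans (by simp)
    rw [tgt_eq_iff] at hsig
    obtain ⟨h0, hmap01⟩ := hsig
    exact ComposableArrows.ext_succ h0 hδeq (hmap01.trans (by simp; rfl))

/-- Existence of lifts of a chain with prescribed last object. -/
lemma lift_exists (h : IsRamifiedCovering P e) :
    ∀ (m : ℕ) (f : ComposableArrows C m) (y : D), P.obj y = f.obj (Fin.last m) →
      ∃ g : ComposableArrows D m, g ⋙ P = f ∧ g.obj (Fin.last m) = y := by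
  intro m
  induction m with
  | zero =>
    intro f y hy
    exact ⟨ComposableArrows.mk₀ y, ComposableArrows.ext₀ hy, rfl⟩
  | succ m ih =>
    intro f y hy
    have hylast : P.obj y = f.δ₀.obj (Fin.last m) := by
      show _ = f.obj (Fin.last m).succ
      rw [Fin.succ_last]
      exact hy
    obtain ⟨g', hg'P, hg'last⟩ := ih f.δ₀ y hylast
    have h0 : P.obj g'.left = f.obj' 1 := Functor.congr_obj hg'P ⟨0, Nat.succ_pos m⟩
    obtain ⟨⟨w, u⟩, hu⟩ := (h.tgt_bij g'.left).surjective ⟨f.obj' 0, f.map' 0 1 ≫ eqToHom h0.symm⟩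
    rw [tgtMap_mk, tgt_eq_iff] at hu
    obtain ⟨hw, hum⟩ := hu
    refine ⟨g'.precomp u, ?_, ?_⟩
    · refine ComposableArrows.ext_succ hw hg'P ?_
      exact hum.trans (by simp; rfl)
    · show g'.obj (Fin.last m) = y
      exact hg'last

end Covering

section Chains
variable {C : Type u} [SmallCategory C]

/-- If a chain is not a constant identity chain, some step is a non-identity. -/
lemma exists_nonid_step {m : ℕ} (F : ComposableArrows C m)
    (hF : ∀ x : C, F ≠ (Functor.const (Fin (m+1))).obj x) :
    ∃ (k : ℕ) (hk : k < m),
      (⟨F.obj' k, F.map' k (k+1)⟩ : Tgt C (F.obj' (k+1))) ≠ ⟨F.obj' (k+1), 𝟙 _⟩ := by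
  by_contra hcon
  push_neg at hcon
  apply hF (F.obj' 0)
  have hobj : ∀ (k : ℕ) (hk : k < m + 1), F.obj ⟨k, hk⟩ = F.obj' 0 := by
    intro k
    induction k with
    | zero => intro hk; rfl
    | succ k ihk =>
      intro hk
      have hstep := hcon k (by omega)
      rw [tgt_id_iff] at hstep
      obtain ⟨hh, -⟩ := hstep
      exact hh.symm.trans (ihk (by omega))
  refine ComposableArrows.ext (fun j => hobj j.1 j.2) ?_
  intro k hk
  have hstep := hcon k hk
  rw [tgt_id_iff] at hstep
  obtain ⟨hh, heq⟩ := hstep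
  rw [heq]
  show _ = eqToHom _ ≫ 𝟙 _ ≫ eqToHom _
  simp
  exact (eqToHom_trans _ _).symm

/-- If some step of a chain is a non-identity, there is a non-identity morphism into the
last object. -/
lemma exists_nonid_tgt {m : ℕ} (F : ComposableArrows C m) (k : ℕ) (hk : k < m)
    (hstep : (⟨F.obj' k, F.map' k (k+1)⟩ : Tgt C (F.obj' (k+1))) ≠ ⟨F.obj' (k+1), 𝟙 _⟩) :
    ∃ t : Tgt C (F.obj (Fin.last m)), t ≠ ⟨F.obj (Fin.last m), 𝟙 _⟩ := by
  show ∃ t : Tgt C (F.obj' m), t ≠ ⟨F.obj' m, 𝟙 (F.obj' m)⟩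
  by_cases hc1 : (⟨F.obj' (k+1), F.map' (k+1) m⟩ : Tgt C (F.obj' m)) = ⟨F.obj' m, 𝟙 _⟩
  · refine ⟨⟨F.obj' k, F.map' k m⟩, ?_⟩
    intro hcon
    rw [tgt_id_iff] at hcon hc1
    obtain ⟨h0, he0⟩ := hcon
    obtain ⟨h1, he1⟩ := hc1
    apply hstep
    rw [tgt_id_iff]
    refine ⟨h0.trans h1.symm, ?_⟩
    have hcmp : F.map' k (k+1) ≫ F.map' (k+1) m = eqToHom h0 := by
      rw [← ComposableArrows.map'_comp F k (k+1) m]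
      exact he0
    rw [he1] at hcmp
    calc F.map' k (k+1) = (F.map' k (k+1) ≫ eqToHom h1) ≫ eqToHom h1.symm := by simp
    _ = eqToHom h0 ≫ eqToHom h1.symm := by rw [hcmp]
    _ = eqToHom (h0.trans h1.symm) := by simp
  · exact ⟨⟨F.obj' (k+1), F.map' (k+1) m⟩, hc1⟩

end Chains

/-- Let `P` be a `d`-fold ramified covering, `f ∈ N_{n+1}(C)` a chain
which is not a constant identity chain and `i` such that `∂ᵢ f` is not a constant
identity chain either. Then `∂ᵢ` restricts to a bijection from the set of preimages of
`f` in `N_{n+1}(C̃)` under `P` onto the set of preimages of `∂ᵢ f` in `N_n(C̃)`. -/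
theorem ramifiedCovering_face_bijOn {D C : Type u}
    [SmallCategory D] [SmallCategory C]
    (P : D ⥤ C) (e : D → ℕ) (d : ℕ)
    (h : IsRamifiedCovering P e) (hd : IsDFold P e d)
    (n : ℕ) (i : Fin (n + 2)) (f : ComposableArrows C (n + 1))
    (hf : ∀ x : C, f ≠ (Functor.const (Fin (n + 2))).obj x)
    (hface : ∀ x : C, nerveFace C n i f ≠ (Functor.const (Fin (n + 1))).obj x) :
    Set.BijOn (nerveFace D n i)
      {g : ComposableArrows D (n + 1) | g ⋙ P = f}
      {g' : ComposableArrows D n | g' ⋙ P = nerveFace C n i f} := by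
  refine ⟨?_, ?_, ?_⟩
  · -- MapsTo
    intro g hg
    exact congrArg (nerveFace C n i) hg
  · -- InjOn
    intro g₁ hg₁ g₂ hg₂ heq
    have e₁ : g₁ ⋙ P = f := hg₁
    have e₂ : g₂ ⋙ P = f := hg₂
    by_cases hi : i = Fin.last (n+1)
    · subst hi
      set sA : Fin (n+2) := (Fin.last (n+1)).succAbove (Fin.last n) with hsAdef
      set φ : sA ⟶ Fin.last (n+1) := homOfLE (Fin.le_last sA) with hφdef
      set u : f.obj sA ⟶ f.obj (Fin.last (n+1)) := f.map φ with hudef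
      have hpen : g₁.obj sA = g₂.obj sA := Functor.congr_obj heq (Fin.last n)
      have hPx : P.obj (g₁.obj sA) = f.obj sA := Functor.congr_obj e₁ sA
      set uelt : Src C (P.obj (g₁.obj sA)) := ⟨f.obj (Fin.last (n+1)), eqToHom hPx ≫ u⟩
        with hueltdef
      have himg₁ : srcMap P (g₁.obj sA) ⟨g₁.obj (Fin.last (n+1)), g₁.map φ⟩ = uelt := by
        rw [srcMap_mk, hueltdef, src_eq_iff]
        refine ⟨Functor.congr_obj e₁ (Fin.last (n+1)), ?_⟩
        have hch₁ : P.map (g₁.map φ) = eqToHom (Functor.congr_obj e₁ sA) ≫ f.map φ ≫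
            eqToHom (Functor.congr_obj e₁ (Fin.last (n+1))).symm := Functor.congr_hom e₁ φ
        rw [hch₁, hudef]
        simp
      have himg₂ : srcMap P (g₁.obj sA)
          ⟨g₂.obj (Fin.last (n+1)), eqToHom hpen ≫ g₂.map φ⟩ = uelt := by
        rw [srcMap_mk, hueltdef, src_eq_iff]
        refine ⟨Functor.congr_obj e₂ (Fin.last (n+1)), ?_⟩
        have hch₂ : P.map (g₂.map φ) = eqToHom (Functor.congr_obj e₂ sA) ≫ f.map φ ≫
            eqToHom (Functor.congr_obj e₂ (Fin.last (n+1))).symm := Functor.congr_hom e₂ φ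
        rw [P.map_comp, eqToHom_map, hch₂, hudef]
        simp
      have hseq : (⟨g₁.obj (Fin.last (n+1)), g₁.map φ⟩ : Src D (g₁.obj sA)) =
          ⟨g₂.obj (Fin.last (n+1)), eqToHom hpen ≫ g₂.map φ⟩ := by
        by_cases hid : uelt = ⟨P.obj (g₁.obj sA), 𝟙 (P.obj (g₁.obj sA))⟩
        · rw [src_lift_id h _ (himg₁.trans hid), src_lift_id h _ (himg₂.trans hid)]
        · obtain ⟨k, hk, hne⟩ := exists_nonid_step (nerveFace C n (Fin.last (n+1)) f) hface
          obtain ⟨⟨a₀, p₀⟩, hp₀⟩ := exists_nonid_tgt (nerveFace C n (Fin.last (n+1)) f) k hk hne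
          have hqne : (⟨f.obj (Fin.last (n+1)), u⟩ : Src C (f.obj sA)) ≠
              ⟨f.obj sA, 𝟙 (f.obj sA)⟩ := by
            intro hcon
            apply hid
            rw [src_id_iff] at hcon
            obtain ⟨hX, hue⟩ := hcon
            rw [hueltdef, src_id_iff]
            exact ⟨hX.trans hPx.symm, by rw [hue]; simp⟩
          have he1 : e (g₁.obj sA) = 1 := key_e_eq_one h p₀ u hp₀ hqne _ hPx
          have hcard : Nat.card (LiftSet P (g₁.obj sA) uelt) = 1 := by
            rw [card_liftSet h _ _ hid, he1]
          have hsub := (Nat.card_eq_one_iff_unique.mp hcard).1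
          have hel := @Subsingleton.elim _ hsub
            (⟨_, ne_id_of_srcMap himg₁ hid, himg₁⟩ : LiftSet P (g₁.obj sA) uelt)
            (⟨_, ne_id_of_srcMap himg₂ hid, himg₂⟩ : LiftSet P (g₁.obj sA) uelt)
          exact congrArg Subtype.val hel
      exact lift_unique h (n+1) g₁ g₂ (e₁.trans e₂.symm) (congrArg Sigma.fst hseq)
    · have hle : i ≤ (Fin.last n).castSucc := by
        rw [Fin.le_def]
        simp only [Fin.coe_castSucc, Fin.val_last]
        have h1 := i.isLt
        have h2 : i.val ≠ n + 1 := fun hcon => hi (Fin.ext hcon)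
        omega
      have hsA : i.succAbove (Fin.last n) = Fin.last (n+1) := by
        rw [Fin.succAbove_of_le_castSucc _ _ hle, Fin.succ_last]
      apply lift_unique h (n+1) g₁ g₂ (e₁.trans e₂.symm)
      have hl : g₁.obj (i.succAbove (Fin.last n)) = g₂.obj (i.succAbove (Fin.last n)) :=
        Functor.congr_obj heq (Fin.last n)
      rw [hsA] at hl
      exact hl
  · -- SurjOn
    intro g' hg'
    have e' : g' ⋙ P = nerveFace C n i f := hg'
    by_cases hi : i = Fin.last (n+1)
    · subst hi
      set sA : Fin (n+2) := (Fin.last (n+1)).succAbove (Fin.last n) with hsAdef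
      set φ : sA ⟶ Fin.last (n+1) := homOfLE (Fin.le_last sA) with hφdef
      set u : f.obj sA ⟶ f.obj (Fin.last (n+1)) := f.map φ with hudef
      have hPx : P.obj (g'.obj (Fin.last n)) = f.obj sA := Functor.congr_obj e' (Fin.last n)
      set uelt : Src C (P.obj (g'.obj (Fin.last n))) :=
        ⟨f.obj (Fin.last (n+1)), eqToHom hPx ≫ u⟩ with hueltdef
      have hlift : ∃ s : Src D (g'.obj (Fin.last n)), srcMap P (g'.obj (Fin.last n)) s = uelt := by
        by_cases hid : uelt = ⟨P.obj (g'.obj (Fin.last n)), 𝟙 (P.obj (g'.obj (Fin.last n)))⟩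
        · exact ⟨⟨g'.obj (Fin.last n), 𝟙 _⟩, (srcMap_id _).trans hid.symm⟩
        · have hcnt : Nat.card (LiftSet P (g'.obj (Fin.last n)) uelt) ≠ 0 := by
            rw [card_liftSet h _ _ hid]
            have := h.one_le (g'.obj (Fin.last n)); omega
          obtain ⟨⟨s, hs1, hs2⟩⟩ := (Nat.card_ne_zero.mp hcnt).1
          exact ⟨s, hs2⟩
      obtain ⟨⟨ytil, su⟩, hsu⟩ := hlift
      have hPy : P.obj ytil = f.obj (Fin.last (n+1)) := congrArg Sigma.fst hsu
      obtain ⟨g, hgP, hglast⟩ := lift_exists h (n+1) f ytil hPy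
      rw [srcMap_mk, hueltdef, src_eq_iff] at hsu
      obtain ⟨hPy2, hsum⟩ := hsu
      have hpen : (⟨g.obj sA, g.map φ ≫ eqToHom hglast⟩ : Tgt D ytil) =
          ⟨g'.obj (Fin.last n), su⟩ := by
        apply (h.tgt_bij ytil).injective
        rw [tgtMap_mk, tgtMap_mk, tgt_eq_iff]
        refine ⟨(Functor.congr_obj hgP sA).trans hPx.symm, ?_⟩
        have hchg : P.map (g.map φ) = eqToHom (Functor.congr_obj hgP sA) ≫ f.map φ ≫
            eqToHom (Functor.congr_obj hgP (Fin.last (n+1))).symm := Functor.congr_hom hgP φ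
        rw [P.map_comp, eqToHom_map, hchg, hsum, hudef]
        simp
      have hgpen : g.obj sA = g'.obj (Fin.last n) := congrArg Sigma.fst hpen
      refine ⟨g, hgP, ?_⟩
      apply lift_unique h n (nerveFace D n (Fin.last (n+1)) g) g'
      · rw [e']
        exact congrArg (nerveFace C n (Fin.last (n+1))) hgP
      · exact hgpen
    · have hle : i ≤ (Fin.last n).castSucc := by
        rw [Fin.le_def]
        simp only [Fin.coe_castSucc, Fin.val_last]
        have h1 := i.isLt
        have h2 : i.val ≠ n + 1 := fun hcon => hi (Fin.ext hcon)
        omega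
      have hsA : i.succAbove (Fin.last n) = Fin.last (n+1) := by
        rw [Fin.succAbove_of_le_castSucc _ _ hle, Fin.succ_last]
      have hy : P.obj (g'.obj (Fin.last n)) = f.obj (i.succAbove (Fin.last n)) :=
        Functor.congr_obj e' (Fin.last n)
      rw [hsA] at hy
      obtain ⟨g, hgP, hglast⟩ := lift_exists h (n+1) f (g'.obj (Fin.last n)) hy
      refine ⟨g, hgP, ?_⟩
      apply lift_unique h n (nerveFace D n i g) g'
      · rw [e']
        exact congrArg (nerveFace C n i) hgP
      · show g.obj (i.succAbove (Fin.last n)) = g'.obj (Fin.last n)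
        rw [hsA]
        exact hglast
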